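/- arXiv:1201.6276 — 6 statements merged into one kernel-verified Lean document; each statement's English description precedes it below -/
import Mathlib

section
/- Let K be a field, let n ≥ 2 and 2 ≤ m ≤ n, and let h = X_0 · X_1 ⋯ X_{m-1} be the normal crossing polynomial in the polynomial ring R = MvPolynomial (Fin n) K. Then the Jacobian ideal of h, i.e. the ideal generated by the partial derivatives pderiv i h for i < n, equals the intersection ⨅_{0 ≤ i < j < m} Ideal.span {X_i, X_j} of the pair ideals (X_i, X_j). -/
open MvPolynomial

/-- For the normal crossing polynomial `h = X 0 * X 1 * ⋯ * X (m-1)` in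
`MvPolynomial (Fin n) K`, the Jacobian ideal generated by all partial derivatives
equals the intersection of the pair ideals `(X i, X j)` for `i < j < m`. -/
theorem jacobian_ideal_of_normal_crossing_eq_inf_pairs
    (K : Type*) [Field K] (n m : ℕ) (hn : 2 ≤ n) (hm2 : 2 ≤ m) (hmn : m ≤ n)
    (h : MvPolynomial (Fin n) K)
    (hh : h = ∏ i ∈ Finset.univ.filter (fun i : Fin n => (i : ℕ) < m), X i) :
    Ideal.span (Set.range fun i : Fin n => pderiv i h) =
      ⨅ (i : Fin n) (j : Fin n) (_ : (i : ℕ) < (j : ℕ)) (_ : (j : ℕ) < m),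
        Ideal.span {X i, X j} := by
  classical
  set F := Finset.univ.filter (fun i : Fin n => (i : ℕ) < m) with hF
  set s₀ : Fin n →₀ ℕ := ∑ i ∈ F, Finsupp.single i 1 with hs₀
  have hs₀app : ∀ j : Fin n, s₀ j = if (j : ℕ) < m then 1 else 0 := by
    intro j
    rw [hs₀, Finsupp.finset_sum_apply]
    simp [Finsupp.single_apply, hF, Finset.sum_ite_eq]
  have hX : ∀ i : Fin n, (X i : MvPolynomial (Fin n) K) = monomial (Finsupp.single i 1) 1 := by
    intro i; rfl
  have hmono : h = monomial s₀ 1 := by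
    rw [hh, hs₀, monomial_sum_one]
    exact Finset.prod_congr rfl fun i _ => hX i
  have hpd : ∀ i : Fin n, pderiv i h = monomial (s₀ - Finsupp.single i 1) (s₀ i : K) := by
    intro i
    rw [hmono, pderiv_monomial, one_mul]
  -- monomial description of LHS
  set D : Set (Fin n →₀ ℕ) :=
    (fun k : Fin n => s₀ - Finsupp.single k 1) '' {k : Fin n | (k : ℕ) < m} with hD
  have hL : Ideal.span (Set.range fun i : Fin n => pderiv i h) =
      Ideal.span ((fun e => monomial e (1 : K)) '' D) := by
    apply le_antisymm <;> rw [Ideal.span_le]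
    · rintro _ ⟨i, rfl⟩
      beta_reduce
      by_cases hi : (i : ℕ) < m
      · have : pderiv i h = monomial (s₀ - Finsupp.single i 1) (1 : K) := by
          rw [hpd, hs₀app]; simp [hi]
        rw [this]
        exact Ideal.subset_span ⟨_, ⟨i, hi, rfl⟩, rfl⟩
      · have : pderiv i h = 0 := by
          rw [hpd, hs₀app]; simp [hi]
        rw [this]; exact (Ideal.span _).zero_mem
    · rintro _ ⟨_, ⟨k, hk, rfl⟩, rfl⟩
      beta_reduce
      have hk' : (k : ℕ) < m := hk
      have : monomial (s₀ - Finsupp.single k 1) (1 : K) = pderiv k h := by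
        rw [hpd, hs₀app]; simp [hk']
      rw [this]
      exact Ideal.subset_span ⟨k, rfl⟩
  have hpair : ∀ i j : Fin n, ({X i, X j} : Set (MvPolynomial (Fin n) K)) =
      (fun e => monomial e (1 : K)) ''
        {Finsupp.single i 1, Finsupp.single j 1} := by
    intro i j
    rw [Set.image_insert_eq, Set.image_singleton, hX i, hX j]
  rw [hL]
  ext x
  simp only [mem_ideal_span_monomial_image, Ideal.mem_iInf, hpair]
  constructor
  · intro H i j hij hjm xi hxi
    obtain ⟨_, ⟨k, hk, rfl⟩, hle⟩ := H xi hxi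
    rcases ne_or_eq k i with hki | rfl
    · refine ⟨Finsupp.single i 1, Set.mem_insert _ _, ?_⟩
      rw [Finsupp.single_le_iff]
      have := hle i
      rwa [Finsupp.tsub_apply, hs₀app, Finsupp.single_apply, if_neg hki,
        if_pos (by omega : (i : ℕ) < m), Nat.sub_zero] at this
    · refine ⟨Finsupp.single j 1, Set.mem_insert_of_mem _ rfl, ?_⟩
      rw [Finsupp.single_le_iff]
      have := hle j
      have hkj : k ≠ j := fun e => by rw [e] at hij; omega
      rwa [Finsupp.tsub_apply, hs₀app, Finsupp.single_apply, if_neg hkj,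
        if_pos hjm, Nat.sub_zero] at this
  · intro H xi hxi
    have key : ∀ i j : Fin n, (i : ℕ) < (j : ℕ) → (j : ℕ) < m → xi i ≠ 0 ∨ xi j ≠ 0 := by
      intro i j hij hjm
      obtain ⟨e, he, hle⟩ := H i j hij hjm xi hxi
      rcases he with rfl | rfl
      · left; have := Finsupp.single_le_iff.mp hle; omega
      · right; have := Finsupp.single_le_iff.mp hle; omega
    by_cases hz : ∃ k : Fin n, (k : ℕ) < m ∧ xi k = 0
    · obtain ⟨k, hk, hk0⟩ := hz
      refine ⟨_, ⟨k, hk, rfl⟩, ?_⟩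
      intro j
      rw [Finsupp.tsub_apply, hs₀app]
      by_cases hjm : (j : ℕ) < m
      · rcases ne_or_eq j k with hjk | rfl
        · have : xi j ≠ 0 := by
            rcases lt_or_gt_of_ne (fun e : (j:ℕ) = (k:ℕ) => hjk (Fin.ext e)) with hlt | hlt
            · rcases key j k hlt hk with h' | h'
              · exact h'
              · exact absurd hk0 h'
            · rcases key k j hlt hjm with h' | h'
              · exact absurd hk0 h'
              · exact h'
          rw [if_pos hjm, Finsupp.single_apply, if_neg (fun e => hjk e.symm)]
          omega
        · rw [if_pos hjm, Finsupp.single_eq_same]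
          omega
      · simp [hjm]
    · push_neg at hz
      have h0n : 0 < n := by omega
      refine ⟨_, ⟨⟨0, h0n⟩, by simpa using (by omega : 0 < m), rfl⟩, ?_⟩
      refine le_trans tsub_le_self ?_
      intro j
      rw [hs₀app]
      by_cases hjm : (j : ℕ) < m
      · rw [if_pos hjm]; exact Nat.one_le_iff_ne_zero.mpr (hz j hjm)
      · simp [hjm]
end

section
/- Let K be a field, let n ≥ 2 and 2 ≤ m ≤ n. In the polynomial ring R = MvPolynomial (Fin n) K, the ideal J generated by the m monomials ∏_{j<m, j≠i} X_j (for i < m) is a radical ideal. -/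
open MvPolynomial

section Aux

variable {K : Type*} [Field K] {n : ℕ}

/-- product of variables over a finset is a monomial -/
lemma prod_X_eq_monomial' (T : Finset (Fin n)) :
    (∏ j ∈ T, (X j : MvPolynomial (Fin n) K)) =
      monomial (∑ j ∈ T, Finsupp.single j 1) 1 := by
  classical
  induction T using Finset.induction_on with
  | empty => simp [monomial_zero']
  | insert _ _ h ih =>
      rw [Finset.prod_insert h, Finset.sum_insert h, ih, X, monomial_mul, one_mul]

/-- The span of an image of variables equals the kernel of the substitution killing them. -/
lemma span_X_image_eq_ker (s : Set (Fin n)) [DecidablePred (· ∈ s)] :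
    Ideal.span (X '' s : Set (MvPolynomial (Fin n) K)) =
      RingHom.ker (aeval (R := K) (fun j : Fin n => if j ∈ s then 0 else X j) :
        MvPolynomial (Fin n) K →ₐ[K] MvPolynomial (Fin n) K).toRingHom := by
  classical
  apply le_antisymm
  · rw [Ideal.span_le]
    rintro _ ⟨i, hi, rfl⟩
    simp [RingHom.mem_ker, hi]
  · intro f hf
    rw [RingHom.mem_ker] at hf
    rw [mem_ideal_span_X_image]
    intro d hd
    by_contra hcon
    push_neg at hcon
    -- every i ∈ s has d i = 0
    have key : coeff d ((aeval (fun j : Fin n => if j ∈ s then 0 else X j)) f) = coeff d f := by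
      conv_lhs => rw [f.as_sum]
      rw [map_sum, Finset.sum_congr rfl (fun e he => rfl)]
      have step : ∀ e : Fin n →₀ ℕ,
          (aeval (fun j : Fin n => if j ∈ s then 0 else X j)) (monomial e (coeff e f)) =
            if ∀ i ∈ s, e i = 0 then monomial e (coeff e f) else 0 := by
        intro e
        rw [aeval_monomial]
        split_ifs with h
        · have : (e.prod fun i k => (if i ∈ s then 0 else (X i : MvPolynomial (Fin n) K)) ^ k)
              = e.prod fun i k => (X i) ^ k := by
            apply Finsupp.prod_congr
            intro i hi
            have : i ∉ s := fun hs => (Finsupp.mem_support_iff.mp hi) (h i hs)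
            simp [this]
          rw [this, monomial_eq]
          rfl
        · push_neg at h
          obtain ⟨i, hi, hei⟩ := h
          have hmem : i ∈ e.support := Finsupp.mem_support_iff.mpr hei
          rw [Finsupp.prod]
          rw [Finset.prod_eq_zero hmem (by simp [hi, zero_pow hei])]
          ring
      rw [Finset.sum_congr rfl (fun e _ => step e)]
      rw [Finset.sum_ite, Finset.sum_const_zero, add_zero, coeff_sum]
      rw [Finset.sum_eq_single d]
      · simp
      · intro e he hne
        simp [coeff_monomial, hne]
      · intro hdd
        simp only [Finset.mem_filter] at hdd
        exact absurd ⟨hd, hcon⟩ hdd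
    have hf' : (aeval (fun j : Fin n => if j ∈ s then 0 else X j)) f = 0 := hf
    rw [hf'] at key
    simp only [coeff_zero] at key
    exact mem_support_iff.mp hd key.symm

lemma pair_prime (a b : Fin n) :
    (Ideal.span (X '' {a, b} : Set (MvPolynomial (Fin n) K))).IsPrime := by
  classical
  rw [span_X_image_eq_ker]
  exact RingHom.ker_isPrime _

end Aux

section Aux2
variable {K : Type*} [Field K] {n : ℕ}

lemma sum_single_apply (T : Finset (Fin n)) (c : Fin n) :
    (∑ j ∈ T, Finsupp.single j (1 : ℕ)) c = if c ∈ T then 1 else 0 := by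
  classical
  rw [Finsupp.finset_sum_apply]
  simp [Finsupp.single_apply]

end Aux2

/-- In `MvPolynomial (Fin n) K`, the ideal generated by the `m` monomials
`∏_{j < m, j ≠ i} X j` (for `i < m`), i.e. the Jacobian ideal of the normal
crossing polynomial `X 0 * ⋯ * X (m-1)`, is a radical ideal. -/
theorem jacobian_ideal_of_normal_crossing_isRadical
    (K : Type*) [Field K] (n m : ℕ) (hn : 2 ≤ n) (hm2 : 2 ≤ m) (hmn : m ≤ n) :
    (Ideal.span { q : MvPolynomial (Fin n) K | ∃ i : Fin n, (i : ℕ) < m ∧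
        q = ∏ j ∈ Finset.univ.filter (fun j : Fin n => (j : ℕ) < m ∧ j ≠ i), X j }).IsRadical := by
  classical
  set e : Fin n → (Fin n →₀ ℕ) := fun i =>
    ∑ j ∈ Finset.univ.filter (fun j : Fin n => (j : ℕ) < m ∧ j ≠ i), Finsupp.single j 1 with he
  set E : Set (Fin n →₀ ℕ) := e '' {i : Fin n | (i : ℕ) < m} with hE
  have hgen : { q : MvPolynomial (Fin n) K | ∃ i : Fin n, (i : ℕ) < m ∧
        q = ∏ j ∈ Finset.univ.filter (fun j : Fin n => (j : ℕ) < m ∧ j ≠ i), X j }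
      = (fun s => monomial s (1 : K)) '' E := by
    ext q
    constructor
    · rintro ⟨i, him, rfl⟩
      exact ⟨e i, ⟨i, him, rfl⟩, (prod_X_eq_monomial' _).symm⟩
    · rintro ⟨_, ⟨i, him, rfl⟩, rfl⟩
      exact ⟨i, him, (prod_X_eq_monomial' _).symm⟩
  rw [hgen]
  intro x hx
  obtain ⟨k, hk⟩ := hx
  have hpair : ∀ a b : Fin n, (a : ℕ) < m → (b : ℕ) < m → a ≠ b →
      ∀ d ∈ x.support, d a ≠ 0 ∨ d b ≠ 0 := by
    intro a b ha hb hab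
    have hsub : Ideal.span ((fun s => monomial s (1 : K)) '' E)
        ≤ Ideal.span (X '' {a, b} : Set (MvPolynomial (Fin n) K)) := by
      rw [Ideal.span_le]
      rintro _ ⟨_, ⟨i, him, rfl⟩, rfl⟩
      have hmem : (monomial (e i) (1 : K)) ∈
          Ideal.span (X '' {a, b} : Set (MvPolynomial (Fin n) K)) := by
        rw [mem_ideal_span_X_image]
        intro d hd
        rw [support_monomial, if_neg one_ne_zero, Finset.mem_singleton] at hd
        subst hd
        rcases eq_or_ne a i with rfl | hai
        · refine ⟨b, by simp, ?_⟩
          rw [he]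
          simp only [sum_single_apply, Finset.mem_filter, Finset.mem_univ, true_and]
          rw [if_pos ⟨hb, hab.symm⟩]; exact one_ne_zero
        · refine ⟨a, by simp, ?_⟩
          rw [he]
          simp only [sum_single_apply, Finset.mem_filter, Finset.mem_univ, true_and]
          rw [if_pos ⟨ha, hai⟩]; exact one_ne_zero
      exact hmem
    have hxk : x ^ k ∈ Ideal.span (X '' {a, b} : Set (MvPolynomial (Fin n) K)) := hsub hk
    have hx' : x ∈ Ideal.span (X '' {a, b} : Set (MvPolynomial (Fin n) K)) :=
      (pair_prime a b).mem_of_pow_mem k hxk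
    rw [mem_ideal_span_X_image] at hx'
    intro d hd
    obtain ⟨c, hc, hcne⟩ := hx' d hd
    rcases hc with rfl | hc
    · exact Or.inl hcne
    · rw [Set.mem_singleton_iff] at hc; subst hc; exact Or.inr hcne
  rw [mem_ideal_span_monomial_image]
  intro d hd
  by_cases hex : ∃ j : Fin n, (j : ℕ) < m ∧ d j = 0
  · obtain ⟨j, hjm, hjz⟩ := hex
    refine ⟨e j, ⟨j, hjm, rfl⟩, ?_⟩
    intro c
    rw [he]
    simp only [sum_single_apply, Finset.mem_filter, Finset.mem_univ, true_and]
    split_ifs with hcf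
    · obtain ⟨hcm, hcj⟩ := hcf
      rcases hpair c j hcm hjm hcj d hd with h | h
      · omega
      · exact absurd hjz h
    · omega
  · push_neg at hex
    have h0n : 0 < n := by omega
    refine ⟨e ⟨0, h0n⟩, ⟨⟨0, h0n⟩, by simpa using hm2.trans_lt' (by omega), ?_⟩, ?_⟩
    · rfl
    · intro c
      rw [he]
      simp only [sum_single_apply, Finset.mem_filter, Finset.mem_univ, true_and]
      split_ifs with hcf
      · have := hex c hcf.1
        omega
      · omega
end

section
/- There is no polynomial h ∈ ℂ[x, y, z] = MvPolynomial (Fin 3) ℂ such that the ideal generated by its three partial derivatives pderiv 0 h, pderiv 1 h, pderiv 2 h equals the ideal Ideal.span {X 0 ^ 3 − X 1 ^ 2, X 2} defining the cusp curve. -/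
open MvPolynomial

private lemma coeff_pderiv' (i : Fin 3) (m : Fin 3 →₀ ℕ) (h : MvPolynomial (Fin 3) ℂ) :
    coeff m (pderiv i h) = ((m i : ℂ) + 1) * coeff (m + Finsupp.single i 1) h := by
  induction h using MvPolynomial.induction_on' with
  | add p q hp hq => simp [hp, hq, mul_add]
  | monomial s a =>
    rw [pderiv_monomial, coeff_monomial, coeff_monomial]
    by_cases hs : s = m + Finsupp.single i 1
    · subst hs
      rw [if_pos (add_tsub_cancel_right _ _), if_pos rfl]
      simp [mul_comm]
    · rw [if_neg hs]
      by_cases hsi : (Finsupp.single i 1 : Fin 3 →₀ ℕ) ≤ s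
      · rw [if_neg, mul_zero]
        intro hc
        exact hs (by rw [← hc, tsub_add_cancel_of_le hsi])
      · rw [Finsupp.single_le_iff] at hsi
        push_neg at hsi
        interval_cases hi : s i
        simp

private lemma cm1 (a f : MvPolynomial (Fin 3) ℂ) (j : Fin 3) :
    coeff (Finsupp.single j 1) (a * f) =
      coeff 0 a * coeff (Finsupp.single j 1) f
      + coeff (Finsupp.single j 1) a * coeff 0 f := by
  rw [coeff_mul, Finsupp.antidiagonal_single]
  simp [Finset.Nat.antidiagonal_succ, Prod.map, Finset.sum_insert, Finsupp.single_eq_zero]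

private lemma cm2 (a f : MvPolynomial (Fin 3) ℂ) (j : Fin 3) :
    coeff (Finsupp.single j 2) (a * f) =
      coeff 0 a * coeff (Finsupp.single j 2) f
      + coeff (Finsupp.single j 1) a * coeff (Finsupp.single j 1) f
      + coeff (Finsupp.single j 2) a * coeff 0 f := by
  rw [coeff_mul, Finsupp.antidiagonal_single]
  rw [show (Finset.HasAntidiagonal.antidiagonal 2 : Finset (ℕ × ℕ)) = {(0,2),(1,1),(2,0)} from by decide]
  rw [show ({(0,2),(1,1),(2,0)} : Finset (ℕ × ℕ)) = insert (0,2) (insert (1,1) {(2,0)}) from rfl]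
  rw [Finset.map_insert, Finset.map_insert, Finset.map_singleton,
    Finset.sum_insert (by simp [Prod.map, Prod.ext_iff, Finsupp.single_eq_single_iff,
      Finsupp.single_eq_zero, Prod.eq_iff_fst_eq_snd_eq]),
    Finset.sum_insert (by simp [Prod.map, Prod.ext_iff, Finsupp.single_eq_single_iff,
      Finsupp.single_eq_zero, Prod.eq_iff_fst_eq_snd_eq]),
    Finset.sum_singleton]
  simp [Finsupp.single_eq_zero, Prod.map]
  ring

/-- Coefficient facts for any member of the cusp ideal. -/
private lemma memI_facts {F : MvPolynomial (Fin 3) ℂ}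
    (hF : F ∈ Ideal.span ({X 0 ^ 3 - X 1 ^ 2, X 2} : Set (MvPolynomial (Fin 3) ℂ))) :
    coeff 0 F = 0 ∧ coeff (Finsupp.single 0 1) F = 0 ∧ coeff (Finsupp.single 1 1) F = 0 ∧
    coeff (Finsupp.single 0 1 + Finsupp.single 1 1) F = 0 ∧
    coeff (Finsupp.single 0 2 + Finsupp.single 1 1) F = 0 ∧
    coeff (Finsupp.single 0 3) F = - coeff (Finsupp.single 1 2) F := by
  rw [Ideal.mem_span_pair] at hF
  obtain ⟨p, q, hpq⟩ := hF
  have hrep : ∀ m : Fin 3 →₀ ℕ, coeff m F =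
      (if Finsupp.single 0 3 ≤ m then coeff (m - Finsupp.single 0 3) p else 0)
      - (if Finsupp.single 1 2 ≤ m then coeff (m - Finsupp.single 1 2) p else 0)
      + (if Finsupp.single 2 1 ≤ m then coeff (m - Finsupp.single 2 1) q else 0) := by
    intro m
    have : F = p * monomial (Finsupp.single 0 3) 1 - p * monomial (Finsupp.single 1 2) 1
        + q * monomial (Finsupp.single 2 1) 1 := by
      rw [← hpq, ← X_pow_eq_monomial, ← X_pow_eq_monomial, ← X_pow_eq_monomial, pow_one]
      ring
    rw [this, coeff_add, coeff_sub, coeff_mul_monomial', coeff_mul_monomial',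
      coeff_mul_monomial']
    simp [mul_one]
  refine ⟨?_, ?_, ?_, ?_, ?_, ?_⟩
  · rw [hrep]; simp [Finsupp.single_le_iff]
  · rw [hrep]; simp [Finsupp.single_le_iff]
  · rw [hrep]; simp [Finsupp.single_le_iff]
  · rw [hrep]; simp [Finsupp.single_le_iff]
  · rw [hrep]; simp [Finsupp.single_le_iff]
  · rw [hrep (Finsupp.single 0 3), hrep (Finsupp.single 1 2)]
    simp [Finsupp.single_le_iff]

/-- The cusp ideal `(X 0 ^ 3 - X 1 ^ 2, X 2)` in `ℂ[x, y, z]` is not the Jacobian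
ideal of any polynomial `h`. -/
theorem cusp_ideal_not_jacobian :
    ¬ ∃ h : MvPolynomial (Fin 3) ℂ,
      Ideal.span {pderiv 0 h, pderiv 1 h, pderiv 2 h} =
        Ideal.span {X 0 ^ 3 - X 1 ^ 2, X 2} := by
  rintro ⟨h, hJ⟩
  set f0 : MvPolynomial (Fin 3) ℂ := pderiv 0 h with hf0def
  set f1 : MvPolynomial (Fin 3) ℂ := pderiv 1 h with hf1def
  set f2 : MvPolynomial (Fin 3) ℂ := pderiv 2 h with hf2def
  -- the partials belong to the cusp ideal
  have hm0 : f0 ∈ Ideal.span ({X 0 ^ 3 - X 1 ^ 2, X 2} : Set (MvPolynomial (Fin 3) ℂ)) :=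
    hJ ▸ Ideal.subset_span (by simp)
  have hm1 : f1 ∈ Ideal.span ({X 0 ^ 3 - X 1 ^ 2, X 2} : Set (MvPolynomial (Fin 3) ℂ)) :=
    hJ ▸ Ideal.subset_span (by simp)
  have hm2 : f2 ∈ Ideal.span ({X 0 ^ 3 - X 1 ^ 2, X 2} : Set (MvPolynomial (Fin 3) ℂ)) :=
    hJ ▸ Ideal.subset_span (by simp)
  obtain ⟨k0a, k0b, k0c, k0d, k0e, k0f⟩ := memI_facts hm0
  obtain ⟨k1a, k1b, k1c, k1d, k1e, k1f⟩ := memI_facts hm1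
  obtain ⟨k2a, k2b, k2c, k2d, k2e, k2f⟩ := memI_facts hm2
  -- symmetry-of-mixed-partials transfers
  have t1 : coeff (Finsupp.single 2 1) f0 = 0 := by
    rw [hf0def, coeff_pderiv']
    rw [hf2def, coeff_pderiv'] at k2b
    simpa [Finsupp.single_apply, add_comm (Finsupp.single (2:Fin 3) 1)] using k2b
  have t2 : coeff (Finsupp.single 2 1) f1 = 0 := by
    rw [hf1def, coeff_pderiv']
    rw [hf2def, coeff_pderiv'] at k2c
    simpa [Finsupp.single_apply, add_comm (Finsupp.single (2:Fin 3) 1)] using k2c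
  have e3 : (Finsupp.single 0 1 + Finsupp.single 1 1 + Finsupp.single 1 1 : Fin 3 →₀ ℕ)
      = Finsupp.single 1 2 + Finsupp.single 0 1 := by
    rw [add_assoc, ← Finsupp.single_add, add_comm]
  have t3 : coeff (Finsupp.single 1 2) f0 = 0 := by
    rw [hf0def, coeff_pderiv']
    rw [hf1def, coeff_pderiv', e3] at k1d
    have h2 : (((Finsupp.single (0:Fin 3) 1 + Finsupp.single 1 1 : Fin 3 →₀ ℕ) 1 : ℕ) : ℂ) + 1 = 2 := by
      norm_num [Finsupp.single_apply]
    rw [h2] at k1d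
    have := mul_eq_zero.mp k1d
    simp only [Finsupp.single_apply] at *
    rcases this with hc | hc
    · norm_num at hc
    · simpa using hc
  have e4 : (Finsupp.single 0 2 + Finsupp.single 1 1 + Finsupp.single 0 1 : Fin 3 →₀ ℕ)
      = Finsupp.single 0 3 + Finsupp.single 1 1 := by
    rw [add_comm (Finsupp.single (0:Fin 3) 2) (Finsupp.single 1 1), add_assoc,
      ← Finsupp.single_add, add_comm]
  have t4 : coeff (Finsupp.single 0 3) f1 = 0 := by
    rw [hf1def, coeff_pderiv']
    rw [hf0def, coeff_pderiv', e4] at k0e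
    have h3 : (((Finsupp.single (0:Fin 3) 2 + Finsupp.single 1 1 : Fin 3 →₀ ℕ) 0 : ℕ) : ℂ) + 1 = 3 := by
      norm_num [Finsupp.single_apply]
    rw [h3] at k0e
    have := mul_eq_zero.mp k0e
    simp only [Finsupp.single_apply] at *
    rcases this with hc | hc
    · norm_num at hc
    · simpa using hc
  have t5 : coeff (Finsupp.single 1 2) f1 = 0 := by
    rw [t4] at k1f; exact neg_eq_zero.mp k1f.symm
  -- extract representations of the generators
  have hzmem : (X 2 : MvPolynomial (Fin 3) ℂ) ∈ Ideal.span ({f0, f1, f2} :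
      Set (MvPolynomial (Fin 3) ℂ)) := by
    rw [hJ]; exact Ideal.subset_span (by simp)
  have hgmem : (X 0 ^ 3 - X 1 ^ 2 : MvPolynomial (Fin 3) ℂ) ∈ Ideal.span ({f0, f1, f2} :
      Set (MvPolynomial (Fin 3) ℂ)) := by
    rw [hJ]; exact Ideal.subset_span (by simp)
  rw [show ({f0, f1, f2} : Set (MvPolynomial (Fin 3) ℂ)) = insert f0 {f1, f2} from rfl,
    Ideal.mem_span_insert] at hzmem hgmem
  obtain ⟨a0, w, hw, hzeq⟩ := hzmem
  rw [Ideal.mem_span_pair] at hw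
  obtain ⟨a1, a2, rfl⟩ := hw
  obtain ⟨b0, v, hv, hgeq⟩ := hgmem
  rw [Ideal.mem_span_pair] at hv
  obtain ⟨b1, b2, rfl⟩ := hv
  -- coefficient of z in the relation for z
  have R1 : coeff 0 a2 * coeff (Finsupp.single 2 1) f2 = 1 := by
    have := congrArg (coeff (Finsupp.single 2 1)) hzeq
    rw [coeff_X, coeff_add, coeff_add, cm1, cm1, cm1, t1, t2, k0a, k1a, k2a] at this
    rw [if_pos rfl] at this
    linear_combination -this
  -- coefficient of z in the relation for x³ - y²
  have R2 : coeff 0 b2 = 0 := by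
    have hlz : coeff (Finsupp.single 2 1) (X 0 ^ 3 - X 1 ^ 2 : MvPolynomial (Fin 3) ℂ)
        = 0 := by
      rw [coeff_sub, X_pow_eq_monomial, X_pow_eq_monomial, coeff_monomial, coeff_monomial]
      simp [Finsupp.single_eq_single_iff]
    have := congrArg (coeff (Finsupp.single 2 1)) hgeq
    rw [hlz, coeff_add, coeff_add, cm1, cm1, cm1, t1, t2, k0a, k1a, k2a] at this
    have hb2 : coeff 0 b2 * coeff (Finsupp.single 2 1) f2 = 0 := by linear_combination -this
    rcases mul_eq_zero.mp hb2 with hc | hc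
    · exact hc
    · rw [hc, mul_zero] at R1; exact absurd R1 zero_ne_one
  -- coefficient of y² in the relation for x³ - y²
  have hly : coeff (Finsupp.single 1 2) (X 0 ^ 3 - X 1 ^ 2 : MvPolynomial (Fin 3) ℂ)
      = -1 := by
    rw [coeff_sub, X_pow_eq_monomial, X_pow_eq_monomial, coeff_monomial, coeff_monomial]
    simp [Finsupp.single_eq_single_iff]
  have R3 := congrArg (coeff (Finsupp.single 1 2)) hgeq
  rw [hly, coeff_add, coeff_add, cm2, cm2, cm2, t3, t5, k0a, k1a, k2a, k0c, k1c, k2c, R2] at R3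
  norm_num at R3
end

section
/- There is no polynomial h ∈ ℂ[x, y, z, w] = MvPolynomial (Fin 4) ℂ such that the ideal generated by its four partial derivatives pderiv 0 h, pderiv 1 h, pderiv 2 h, pderiv 3 h equals the ideal Ideal.span {X 0 * X 2, X 0 * X 3, X 1 * X 2, X 1 * X 3}. -/
open MvPolynomial

lemma coeff_pderiv_aux (i : Fin 4) (m : Fin 4 →₀ ℕ) (f : MvPolynomial (Fin 4) ℂ) :
    coeff m (pderiv i f) = ((m i : ℂ) + 1) * coeff (m + Finsupp.single i 1) f := by
  induction f using MvPolynomial.induction_on' with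
  | add p q hp hq => simp [hp, hq, mul_add]
  | monomial s a =>
    rw [pderiv_monomial, coeff_monomial, coeff_monomial]
    by_cases h2 : s = m + Finsupp.single i 1
    · subst h2
      rw [if_pos (by simp), if_pos rfl]
      push_cast [Finsupp.add_apply, Finsupp.single_apply]
      simp
      ring
    · rw [if_neg h2, mul_zero]
      rcases Nat.eq_zero_or_pos (s i) with h0 | h0
      · split_ifs with h1
        · simp [h0]
        · rfl
      · rw [if_neg]
        intro h1
        exact h2 ((tsub_eq_iff_eq_add_of_le (Finsupp.single_le_iff.mpr h0)).mp h1)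

/-- The radical ideal `(X0*X2, X0*X3, X1*X2, X1*X3) = (x,y) ∩ (z,w)` in `ℂ[x,y,z,w]`
is not the Jacobian ideal of any polynomial `h`. -/
theorem two_planes_ideal_not_jacobian :
    ¬ ∃ h : MvPolynomial (Fin 4) ℂ,
      Ideal.span {pderiv 0 h, pderiv 1 h, pderiv 2 h, pderiv 3 h} =
        Ideal.span {X 0 * X 2, X 0 * X 3, X 1 * X 2, X 1 * X 3} := by
  rintro ⟨h, hh⟩
  set e : Fin 4 → (Fin 4 →₀ ℕ) := fun i => Finsupp.single i 1 with he
  have hX : ∀ a b : Fin 4, (X a * X b : MvPolynomial (Fin 4) ℂ)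
      = monomial (e a + e b) 1 := by
    intro a b
    rw [X, X, monomial_mul, one_mul]
  -- elements of I have vanishing coefficients away from the generators' supports
  have L1 : ∀ p ∈ Ideal.span ({X 0 * X 2, X 0 * X 3, X 1 * X 2, X 1 * X 3} :
      Set (MvPolynomial (Fin 4) ℂ)),
      ∀ m : Fin 4 →₀ ℕ, ((m 0 = 0 ∧ m 1 = 0) ∨ (m 2 = 0 ∧ m 3 = 0)) → coeff m p = 0 := by
    intro p hp
    refine Submodule.span_induction ?_ ?_ ?_ ?_ hp
    · rintro x hx m hm
      simp only [Set.mem_insert_iff, Set.mem_singleton_iff] at hx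
      rcases hx with rfl | rfl | rfl | rfl <;>
      · rw [hX, coeff_monomial, if_neg]
        intro heq
        rcases hm with ⟨h1, h2⟩ | ⟨h1, h2⟩ <;>
          (rw [← heq] at h1 h2 <;> simp [he, Finsupp.single_apply] at h1 h2)
    · intro m _
      simp
    · intro x y _ _ hx hy m hm
      simp [coeff_add, hx m hm, hy m hm]
    · intro a x _ hx m hm
      rw [smul_eq_mul, coeff_mul]
      refine Finset.sum_eq_zero fun v hv => ?_
      rw [Finset.HasAntidiagonal.mem_antidiagonal] at hv
      have hle : v.2 ≤ m := hv ▸ le_add_self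
      have hle' := Finsupp.le_def.mp hle
      rw [hx v.2 ?_, mul_zero]
      rcases hm with ⟨h1, h2⟩ | ⟨h1, h2⟩
      · exact Or.inl ⟨Nat.le_zero.mp (h1 ▸ hle' 0), Nat.le_zero.mp (h2 ▸ hle' 1)⟩
      · exact Or.inr ⟨Nat.le_zero.mp (h1 ▸ hle' 2), Nat.le_zero.mp (h2 ▸ hle' 3)⟩
  have hp0 : pderiv 0 h ∈ Ideal.span ({X 0 * X 2, X 0 * X 3, X 1 * X 2, X 1 * X 3} :
      Set (MvPolynomial (Fin 4) ℂ)) := hh ▸ Ideal.subset_span (by simp)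
  have hp1 : pderiv 1 h ∈ Ideal.span ({X 0 * X 2, X 0 * X 3, X 1 * X 2, X 1 * X 3} :
      Set (MvPolynomial (Fin 4) ℂ)) := hh ▸ Ideal.subset_span (by simp)
  have hp2 : pderiv 2 h ∈ Ideal.span ({X 0 * X 2, X 0 * X 3, X 1 * X 2, X 1 * X 3} :
      Set (MvPolynomial (Fin 4) ℂ)) := hh ▸ Ideal.subset_span (by simp)
  have hp3 : pderiv 3 h ∈ Ideal.span ({X 0 * X 2, X 0 * X 3, X 1 * X 2, X 1 * X 3} :
      Set (MvPolynomial (Fin 4) ℂ)) := hh ▸ Ideal.subset_span (by simp)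
  -- transfer vanishing between partials via symmetry of second derivatives
  have key : ∀ (i j : Fin 4) (mi mj : Fin 4 →₀ ℕ), mi + e i = mj + e j →
      coeff mj (pderiv j h) = 0 → coeff mi (pderiv i h) = 0 := by
    intro i j mi mj hm hz
    rw [coeff_pderiv_aux] at hz ⊢
    rw [he] at hm
    rw [hm]
    rcases mul_eq_zero.mp hz with h' | h'
    · exact absurd h' (Nat.cast_add_one_ne_zero _)
    · rw [h', mul_zero]
  have k0 : coeff (e 0 + e 2) (pderiv 0 h) = 0 :=
    key 0 2 _ (e 0 + e 0) (by abel)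
      (L1 _ hp2 _ (Or.inr ⟨by simp [he, Finsupp.single_apply], by simp [he, Finsupp.single_apply]⟩))
  have k1 : coeff (e 0 + e 2) (pderiv 1 h) = 0 :=
    key 1 2 _ (e 0 + e 1) (by abel)
      (L1 _ hp2 _ (Or.inr ⟨by simp [he, Finsupp.single_apply], by simp [he, Finsupp.single_apply]⟩))
  have k2 : coeff (e 0 + e 2) (pderiv 2 h) = 0 :=
    key 2 0 _ (e 2 + e 2) (by abel)
      (L1 _ hp0 _ (Or.inl ⟨by simp [he, Finsupp.single_apply], by simp [he, Finsupp.single_apply]⟩))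
  have k3 : coeff (e 0 + e 2) (pderiv 3 h) = 0 :=
    key 3 0 _ (e 2 + e 3) (by abel)
      (L1 _ hp0 _ (Or.inl ⟨by simp [he, Finsupp.single_apply], by simp [he, Finsupp.single_apply]⟩))
  -- all coefficients of the partials below xz vanish
  have L3 : ∀ p ∈ ({pderiv 0 h, pderiv 1 h, pderiv 2 h, pderiv 3 h} :
      Set (MvPolynomial (Fin 4) ℂ)), ∀ b : Fin 4 →₀ ℕ, b ≤ e 0 + e 2 → coeff b p = 0 := by
    intro p hp b hb
    have hb' := Finsupp.le_def.mp hb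
    have hb0 : b 0 ≤ 1 := by simpa [he, Finsupp.single_apply] using hb' 0
    have hb1 : b 1 = 0 := by simpa [he, Finsupp.single_apply] using hb' 1
    have hb2 : b 2 ≤ 1 := by simpa [he, Finsupp.single_apply] using hb' 2
    have hb3 : b 3 = 0 := by simpa [he, Finsupp.single_apply] using hb' 3
    simp only [Set.mem_insert_iff, Set.mem_singleton_iff] at hp
    by_cases hz2 : b 2 = 0
    · rcases hp with rfl | rfl | rfl | rfl
      · exact L1 _ hp0 _ (Or.inr ⟨hz2, hb3⟩)
      · exact L1 _ hp1 _ (Or.inr ⟨hz2, hb3⟩)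
      · exact L1 _ hp2 _ (Or.inr ⟨hz2, hb3⟩)
      · exact L1 _ hp3 _ (Or.inr ⟨hz2, hb3⟩)
    · by_cases hz0 : b 0 = 0
      · rcases hp with rfl | rfl | rfl | rfl
        · exact L1 _ hp0 _ (Or.inl ⟨hz0, hb1⟩)
        · exact L1 _ hp1 _ (Or.inl ⟨hz0, hb1⟩)
        · exact L1 _ hp2 _ (Or.inl ⟨hz0, hb1⟩)
        · exact L1 _ hp3 _ (Or.inl ⟨hz0, hb1⟩)
      · have e0 : b 0 = 1 := by omega
        have e2 : b 2 = 1 := by omega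
        have hbe : b = e 0 + e 2 := by
          ext j
          fin_cases j <;> simp [he, Finsupp.single_apply, e0, hb1, e2, hb3]
        subst hbe
        rcases hp with rfl | rfl | rfl | rfl
        · exact k0
        · exact k1
        · exact k2
        · exact k3
  -- but xz is in the span of the partials
  have hmem : (X 0 * X 2 : MvPolynomial (Fin 4) ℂ) ∈
      Ideal.span ({pderiv 0 h, pderiv 1 h, pderiv 2 h, pderiv 3 h} :
        Set (MvPolynomial (Fin 4) ℂ)) := by
    rw [hh]
    exact Ideal.subset_span (by simp)
  have final : ∀ b : Fin 4 →₀ ℕ, b ≤ e 0 + e 2 →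
      coeff b (X 0 * X 2 : MvPolynomial (Fin 4) ℂ) = 0 := by
    refine Submodule.span_induction (p := fun x _ => ∀ b : Fin 4 →₀ ℕ,
      b ≤ e 0 + e 2 → coeff b x = 0) L3 ?_ ?_ ?_ hmem
    · intro b _
      simp
    · intro x y _ _ hx hy b hb
      simp [coeff_add, hx b hb, hy b hb]
    · intro a x _ hx b hb
      rw [smul_eq_mul, coeff_mul]
      refine Finset.sum_eq_zero fun v hv => ?_
      rw [Finset.HasAntidiagonal.mem_antidiagonal] at hv
      have hle : v.2 ≤ b := hv ▸ le_add_self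
      rw [hx v.2 (hle.trans hb), mul_zero]
  have h1 : coeff (e 0 + e 2) (X 0 * X 2 : MvPolynomial (Fin 4) ℂ) = 0 := final _ le_rfl
  rw [hX 0 2, coeff_monomial, if_pos rfl] at h1
  exact one_ne_zero h1
end

section
/- There is no polynomial h ∈ ℂ[x_1, …, x_6] = MvPolynomial (Fin 6) ℂ such that the ideal generated by its six partial derivatives pderiv i h (i < 6) equals the ideal generated by the nine products X i * X j for i ∈ {0,1,2} and j ∈ {3,4,5} (which is the intersection Ideal.span {X 0, X 1, X 2} ⊓ Ideal.span {X 3, X 4, X 5}). -/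
open MvPolynomial

noncomputable section JacAux

/-- total degree of an exponent vector -/
def jdeg (d : Fin 6 →₀ ℕ) : ℕ := ∑ i, d i

lemma jdeg_add (u v : Fin 6 →₀ ℕ) : jdeg (u + v) = jdeg u + jdeg v := by
  simp [jdeg, Finset.sum_add_distrib]

lemma jdeg_eq_zero {d : Fin 6 →₀ ℕ} (h : jdeg d = 0) : d = 0 := by
  ext i
  have := Finset.sum_eq_zero_iff.mp h i (Finset.mem_univ i)
  simpa using this

lemma jdeg_single (i : Fin 6) : jdeg (Finsupp.single i 1) = 1 := by
  simp [jdeg, Finsupp.single_apply]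

lemma X_mul_X_eq (i j : Fin 6) :
    (X i * X j : MvPolynomial (Fin 6) ℂ) =
      monomial (Finsupp.single i 1 + Finsupp.single j 1) 1 := by
  rw [X, X, monomial_mul, one_mul]

/-- Lemma A: elements of the ideal J have vanishing coefficients in degrees ≤ 1. -/
lemma low_coeff_zero {g : MvPolynomial (Fin 6) ℂ}
    (hg : g ∈ Ideal.span { q : MvPolynomial (Fin 6) ℂ |
      ∃ i : Fin 6, ∃ j : Fin 6, (i : ℕ) < 3 ∧ 3 ≤ (j : ℕ) ∧ q = X i * X j })
    {d : Fin 6 →₀ ℕ} (hd : jdeg d ≤ 1) : coeff d g = 0 := by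
  induction hg using Submodule.span_induction generalizing d with
  | mem x hx =>
    obtain ⟨i, j, hi, hj, rfl⟩ := hx
    rw [X_mul_X_eq, coeff_monomial]
    rw [if_neg]
    rintro rfl
    rw [jdeg_add, jdeg_single, jdeg_single] at hd
    omega
  | zero => simp
  | add x y _ _ hx hy => simp [coeff_add, hx hd, hy hd]
  | smul r x _ hx =>
    rw [smul_eq_mul, coeff_mul]
    refine Finset.sum_eq_zero fun p hp => ?_
    rw [Finset.HasAntidiagonal.mem_antidiagonal] at hp
    have : jdeg p.2 ≤ 1 := by
      have := jdeg_add p.1 p.2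
      rw [hp] at this
      omega
    rw [hx this, mul_zero]

/-- Lemma B: for `g` with vanishing low coefficients and `d` of degree 2,
`coeff d (r * g) = constantCoeff r * coeff d g`. -/
lemma coeff_mul_of_low_zero {g : MvPolynomial (Fin 6) ℂ}
    (hg : ∀ d : Fin 6 →₀ ℕ, jdeg d ≤ 1 → coeff d g = 0)
    (r : MvPolynomial (Fin 6) ℂ) {d : Fin 6 →₀ ℕ} (hd : jdeg d = 2) :
    coeff d (r * g) = constantCoeff r * coeff d g := by
  rw [coeff_mul]
  rw [Finset.sum_eq_single_of_mem (0, d) (by rw [Finset.HasAntidiagonal.mem_antidiagonal]; simp)]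
  · simp [constantCoeff_eq]
  · rintro ⟨u, v⟩ hp hne
    rw [Finset.HasAntidiagonal.mem_antidiagonal] at hp
    by_cases hu : u = 0
    · exfalso
      apply hne
      subst hu
      have hv : v = d := by simpa using hp
      rw [hv]
    · have h1 : 1 ≤ jdeg u := by
        rcases Nat.eq_zero_or_pos (jdeg u) with h | h
        · exact absurd (jdeg_eq_zero h) hu
        · exact h
      have : jdeg v ≤ 1 := by
        have := jdeg_add u v
        rw [hp, hd] at this
        omega
      rw [hg v this, mul_zero]

/-- the embeddings -/
def emb1 (a : Fin 3) : Fin 6 := ⟨a, by omega⟩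
def emb2 (b : Fin 3) : Fin 6 := ⟨b + 3, by omega⟩

def mon (a b : Fin 3) : Fin 6 →₀ ℕ := Finsupp.single (emb1 a) 1 + Finsupp.single (emb2 b) 1

lemma jdeg_mon (a b : Fin 3) : jdeg (mon a b) = 2 := by
  rw [mon, jdeg_add, jdeg_single, jdeg_single]

/-- the linear map extracting the 9 quadratic coefficients -/
def phi : MvPolynomial (Fin 6) ℂ →ₗ[ℂ] (Fin 3 × Fin 3 → ℂ) where
  toFun p := fun ab => coeff (mon ab.1 ab.2) p
  map_add' p q := by funext ab; simp [coeff_add]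
  map_smul' c p := by funext ab; simp [coeff_smul]

lemma mon_inj {i j : Fin 6} (hi : (i : ℕ) < 3) (hj : 3 ≤ (j : ℕ)) (a b : Fin 3) :
    Finsupp.single i 1 + Finsupp.single j 1 = mon a b ↔ i = emb1 a ∧ j = emb2 b := by
  constructor
  · intro h
    constructor
    · by_contra hne
      have hij : ¬ j = i := fun he => by rw [← he] at hi; omega
      have h1 : ¬ emb1 a = i := fun he => hne he.symm
      have h2 : ¬ emb2 b = i := fun he => by
        have h'' := congrArg Fin.val he
        simp [emb2] at h''
        omega
      have hc := DFunLike.congr_fun h i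
      simp [mon, Finsupp.single_apply, hij, h1, h2] at hc
    · by_contra hne
      have hij : ¬ i = j := fun he => by rw [he] at hi; omega
      have h1 : ¬ emb1 a = j := fun he => by
        have h'' := congrArg Fin.val he
        simp [emb1] at h''
        omega
      have h2 : ¬ emb2 b = j := fun he => hne he.symm
      have hc := DFunLike.congr_fun h j
      simp [mon, Finsupp.single_apply, hij, h1, h2] at hc
  · rintro ⟨rfl, rfl⟩; rfl

lemma phi_gen (a b : Fin 3) :
    phi (X (emb1 a) * X (emb2 b)) = Pi.single (a, b) (1 : ℂ) := by
  funext cd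
  obtain ⟨c, d⟩ := cd
  rw [phi]
  simp only [LinearMap.coe_mk, AddHom.coe_mk]
  rw [X_mul_X_eq, coeff_monomial, Pi.single_apply]
  have hcond : (Finsupp.single (emb1 a) 1 + Finsupp.single (emb2 b) 1 = mon c d)
      ↔ ((c, d) = (a, b)) := by
    rw [mon_inj (by simp [emb1]) (by simp [emb2])]
    constructor
    · rintro ⟨h1, h2⟩
      have h1' := congrArg Fin.val h1
      have h2' := congrArg Fin.val h2
      simp [emb1] at h1'
      simp [emb2] at h2'
      simp [Prod.ext_iff, Fin.ext_iff]
      omega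
    · rintro he
      have h1 : c = a := congrArg Prod.fst he
      have h2 : d = b := congrArg Prod.snd he
      subst h1; subst h2
      exact ⟨rfl, rfl⟩
  by_cases h : Finsupp.single (emb1 a) 1 + Finsupp.single (emb2 b) 1 = mon c d
  · rw [if_pos h, if_pos (hcond.mp h)]
  · rw [if_neg h, if_neg (fun he => h (hcond.mpr he))]

end JacAux

/-- The equidimensional radical ideal `(x₁,x₂,x₃) ∩ (x₄,x₅,x₆)`, generated by the nine
products `X i * X j` with `i ∈ {0,1,2}` and `j ∈ {3,4,5}`, in `ℂ[x₁,…,x₆]` is not the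
Jacobian ideal of any polynomial `h`. -/
theorem two_three_planes_ideal_not_jacobian :
    ¬ ∃ h : MvPolynomial (Fin 6) ℂ,
      Ideal.span (Set.range fun i : Fin 6 => pderiv i h) =
        Ideal.span { q : MvPolynomial (Fin 6) ℂ |
          ∃ i : Fin 6, ∃ j : Fin 6, (i : ℕ) < 3 ∧ 3 ≤ (j : ℕ) ∧ q = X i * X j } := by
  rintro ⟨h, hEq⟩
  set J := Ideal.span { q : MvPolynomial (Fin 6) ℂ |
      ∃ i : Fin 6, ∃ j : Fin 6, (i : ℕ) < 3 ∧ 3 ≤ (j : ℕ) ∧ q = X i * X j } with hJ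
  set V : Submodule ℂ (Fin 3 × Fin 3 → ℂ) :=
    Submodule.span ℂ (Set.range fun k : Fin 6 => phi (pderiv k h)) with hV
  -- every element of J has phi-image in V
  have key : ∀ g ∈ J, phi g ∈ V := by
    intro g hg
    rw [← hEq] at hg
    -- strengthen: g ∈ J ∧ phi g ∈ V
    have : g ∈ J ∧ phi g ∈ V := by
      induction hg using Submodule.span_induction with
      | mem x hx =>
        obtain ⟨k, rfl⟩ := hx
        refine ⟨?_, Submodule.subset_span ⟨k, rfl⟩⟩
        rw [← hEq]
        exact Ideal.subset_span ⟨k, rfl⟩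
      | zero => simp
      | add x y _ _ hx hy => exact ⟨J.add_mem hx.1 hy.1, V.add_mem hx.2 hy.2⟩
      | smul r x _ hx =>
        refine ⟨J.smul_mem r hx.1, ?_⟩
        have heq : phi (r • x) = constantCoeff r • phi x := by
          funext ab
          rw [phi]
          simp only [LinearMap.coe_mk, AddHom.coe_mk, Pi.smul_apply, smul_eq_mul]
          exact coeff_mul_of_low_zero (fun d hd => low_coeff_zero hx.1 hd) r (jdeg_mon ab.1 ab.2)
        rw [heq]
        exact V.smul_mem _ hx.2
    exact this.2
  -- hence all 9 standard basis vectors lie in V, so V = ⊤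
  have hsingle : ∀ ab : Fin 3 × Fin 3, Pi.single ab (1 : ℂ) ∈ V := by
    rintro ⟨a, b⟩
    have hmem : (X (emb1 a) * X (emb2 b) : MvPolynomial (Fin 6) ℂ) ∈ J :=
      Ideal.subset_span ⟨emb1 a, emb2 b, by simp [emb1], by simp [emb2], rfl⟩
    have := key _ hmem
    rwa [phi_gen] at this
  have htop : V = ⊤ := by
    rw [Submodule.eq_top_iff']
    intro x
    rw [pi_eq_sum_univ x]
    refine Submodule.sum_mem _ fun ab _ => Submodule.smul_mem _ _ ?_
    have e : (fun j => if ab = j then (1 : ℂ) else 0) = Pi.single ab 1 := by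
      funext j
      rw [Pi.single_apply]
      simp [eq_comm]
    rw [e]
    exact hsingle ab
  -- dimension count: 9 ≤ 6
  have h9 : Module.finrank ℂ V = 9 := by
    rw [htop, finrank_top, Module.finrank_fintype_fun_eq_card]
    simp
  have h6 : Module.finrank ℂ V ≤ 6 := by
    have := finrank_range_le_card (R := ℂ) (fun k : Fin 6 => phi (pderiv k h))
    simpa [Set.finrank] using this
  omega
end

section
/- Let h = (X 0 ^ 2 + X 1 ^ 2 + X 2 ^ 2) * (X 3 ^ 2 − X 4 ^ 2) in the polynomial ring ℂ[x, y, z, s, t] = MvPolynomial (Fin 5) ℂ. Then the Jacobian ideal of h, generated by the five partial derivatives pderiv i h (i < 5), equals the intersection Ideal.span {X 0, X 1, X 2} ⊓ Ideal.span {X 3 − X 4, X 0 ^ 2 + X 1 ^ 2 + X 2 ^ 2} ⊓ Ideal.span {X 3, X 4} ⊓ Ideal.span {X 3 + X 4, X 0 ^ 2 + X 1 ^ 2 + X 2 ^ 2}; in particular, the Jacobian ideal of h is radical. -/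
open MvPolynomial

noncomputable section JacSplayedAux

namespace JacSplayedAux

/-- Kernel lemma: `p - aeval f p` lies in any ideal containing all `X i - f i`. -/
theorem sub_aeval_mem {σ R : Type*} [CommRing R]
    (f : σ → MvPolynomial σ R) (I : Ideal (MvPolynomial σ R))
    (hf : ∀ i, X i - f i ∈ I) (p : MvPolynomial σ R) :
    p - aeval f p ∈ I := by
  induction p using MvPolynomial.induction_on with
  | C a => simp only [aeval_C, algebraMap_eq, sub_self]; exact I.zero_mem
  | add p q hp hq =>
      have e : p + q - aeval f (p + q) = (p - aeval f p) + (q - aeval f q) := by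
        rw [map_add]; ring
      rw [e]; exact add_mem hp hq
  | mul_X p i hp =>
      have e : p * X i - aeval f (p * X i)
          = (p - aeval f p) * f i + p * (X i - f i) := by
        rw [map_mul, aeval_X]; ring
      rw [e]; exact add_mem (Ideal.mul_mem_right _ _ hp) (Ideal.mul_mem_left _ _ (hf i))

/-- Primality of `X i + c • X j` via a retraction. -/
theorem prime_X_add_C_mul_X {σ : Type*} [DecidableEq σ] {R : Type*} [CommRing R] [IsDomain R]
    (i j : σ) (hij : i ≠ j) (c : R) :
    Prime (X i + C c * X j : MvPolynomial σ R) := by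
  set p₁ : MvPolynomial σ R := X i + C c * X j with hp₁
  set f : σ → MvPolynomial σ R := fun k => if k = i then -(C c * X j) else X k with hf
  have hker : ∀ p : MvPolynomial σ R, p - aeval f p ∈ Ideal.span {p₁} := by
    intro p
    refine sub_aeval_mem f _ (fun k => ?_) p
    by_cases hk : k = i
    · subst hk
      have : X k - f k = p₁ := by simp [hf, hp₁]
      rw [this]; exact Ideal.subset_span rfl
    · have : X k - f k = 0 := by simp [hf, hk]
      rw [this]; exact Ideal.zero_mem _
  have hτp₁ : aeval f p₁ = 0 := by
    simp [hp₁, hf, hij.symm]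
  constructor
  · -- p₁ ≠ 0
    intro h0
    have := congrArg (eval (fun k => if k = i then (1 : R) else 0)) h0
    simp [hp₁, hij.symm] at this
  constructor
  · intro hu
    obtain ⟨v, hv⟩ := hu.exists_right_inv
    have := congrArg constantCoeff hv
    simp [hp₁] at this
  · intro a b hab
    obtain ⟨w, hw⟩ := hab
    have hab0 : aeval f a * aeval f b = 0 := by
      have h2 := congrArg (aeval f) hw
      rw [map_mul, map_mul, hτp₁, zero_mul] at h2
      exact h2
    rcases mul_eq_zero.mp hab0 with h | h
    · left
      have := hker a
      rw [h, sub_zero] at this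
      exact Ideal.mem_span_singleton.mp this
    · right
      have := hker b
      rw [h, sub_zero] at this
      exact Ideal.mem_span_singleton.mp this

end JacSplayedAux
noncomputable section
namespace JacSplayedAux2
open JacSplayedAux

abbrev A4 : Type := MvPolynomial (Fin 4) ℂ
abbrev R5 : Type := MvPolynomial (Fin 5) ℂ

theorem no_sq (b : A4) : b ^ 2 + (X 0 ^ 2 + X 1 ^ 2) ≠ 0 := by
  intro hb
  set p₁ : A4 := X 0 + C Complex.I * X 1 with hp₁def
  set p₂ : A4 := X 0 + C (-Complex.I) * X 1 with hp₂def
  have hprime : Prime p₁ := JacSplayedAux.prime_X_add_C_mul_X 0 1 (by decide) Complex.I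
  have ha : (C Complex.I : A4) + C (-Complex.I) = 0 := by rw [← map_add]; simp
  have hab : (C Complex.I : A4) * C (-Complex.I) = 1 := by
    rw [← map_mul]
    norm_num [Complex.I_mul_I]
  have hmul : p₁ * p₂ = X 0 ^ 2 + X 1 ^ 2 := by
    rw [hp₁def, hp₂def]
    linear_combination (X 0 * X 1 : A4) * ha + (X 1 ^ 2 : A4) * hab
  have h1 : p₁ ∣ b ^ 2 := ⟨-p₂, by linear_combination hb + hmul⟩
  obtain ⟨b₁, rfl⟩ := hprime.dvd_of_dvd_pow h1
  have hz : p₁ * (p₁ * b₁ ^ 2 + p₂) = 0 := by linear_combination hb + hmul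
  have h2 : p₁ * b₁ ^ 2 + p₂ = 0 := by
    rcases mul_eq_zero.mp hz with h | h
    · exact absurd h hprime.ne_zero
    · exact h
  have := congrArg (eval ![Complex.I, -1, 0, 0]) h2
  simp [hp₁def, hp₂def] at this


theorem prime_quad {A : Type*} [CommRing A] [IsDomain A] [UniqueFactorizationMonoid A]
    (c : A) (hc : ∀ b : A, b ^ 2 + c ≠ 0) :
    Prime (Polynomial.X ^ 2 + Polynomial.C c) := by
  rw [← UniqueFactorizationMonoid.irreducible_iff_prime]
  constructor
  · intro hu
    have := Polynomial.natDegree_eq_zero_of_isUnit hu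
    rw [Polynomial.natDegree_X_pow_add_C] at this
    omega
  · intro g k hgk
    have hne : (Polynomial.X ^ 2 + Polynomial.C c : Polynomial A) ≠ 0 :=
      Polynomial.X_pow_add_C_ne_zero (by norm_num : (0:ℕ) < 2) c
    have hg0 : g ≠ 0 := by rintro rfl; simp at hgk; exact hne hgk
    have hk0 : k ≠ 0 := by rintro rfl; simp at hgk; exact hne hgk
    have hdeg : g.natDegree + k.natDegree = 2 := by
      rw [← Polynomial.natDegree_mul hg0 hk0, ← hgk, Polynomial.natDegree_X_pow_add_C]
    have hlead : g.leadingCoeff * k.leadingCoeff = 1 := by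
      rw [← Polynomial.leadingCoeff_mul, ← hgk,
        Polynomial.leadingCoeff_X_pow_add_C (by norm_num : 0 < 2)]
    rcases Nat.lt_or_ge g.natDegree 1 with hg1 | hg1
    · left
      have hgd : g.natDegree = 0 := by omega
      have : IsUnit g.leadingCoeff := IsUnit.of_mul_eq_one _ hlead
      rw [Polynomial.leadingCoeff, hgd] at this
      rw [Polynomial.eq_C_of_natDegree_eq_zero hgd]
      exact Polynomial.isUnit_C.mpr this
    rcases Nat.lt_or_ge k.natDegree 1 with hk1 | hk1
    · right
      have hkd : k.natDegree = 0 := by omega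
      have : IsUnit k.leadingCoeff := IsUnit.of_mul_eq_one _ (by rw [mul_comm]; exact hlead)
      rw [Polynomial.leadingCoeff, hkd] at this
      rw [Polynomial.eq_C_of_natDegree_eq_zero hkd]
      exact Polynomial.isUnit_C.mpr this
    exfalso
    have hgd : g.natDegree = 1 := by omega
    have hkd : k.natDegree = 1 := by omega
    have hgE := Polynomial.eq_X_add_C_of_natDegree_le_one (hgd.le)
    have hkE := Polynomial.eq_X_add_C_of_natDegree_le_one (hkd.le)
    set a1 := g.coeff 1; set a0 := g.coeff 0
    set b1 := k.coeff 1; set b0 := k.coeff 0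
    rw [hgE, hkE] at hgk
    have hexp : (Polynomial.C a1 * Polynomial.X + Polynomial.C a0) *
        (Polynomial.C b1 * Polynomial.X + Polynomial.C b0)
        = Polynomial.C (a1 * b1) * Polynomial.X ^ 2
          + Polynomial.C (a1 * b0 + a0 * b1) * Polynomial.X + Polynomial.C (a0 * b0) := by
      simp only [map_mul, map_add]; ring
    rw [hexp] at hgk
    have e2 : a1 * b1 = 1 := by
      have h2 := congrArg (fun p => Polynomial.coeff p 2) hgk
      simpa [mul_assoc] using h2.symm
    have e1 : a1 * b0 + a0 * b1 = 0 := by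
      have h1 := congrArg (fun p => Polynomial.coeff p 1) hgk
      simpa [mul_assoc] using h1.symm
    have e0 : a0 * b0 = c := by
      have h0 := congrArg (fun p => Polynomial.coeff p 0) hgk
      simpa using h0.symm
    exact hc (a1 * b0) (by linear_combination (a1 * b0) * e1 - (a0 * b0) * e2 - e0)


example : UniqueFactorizationMonoid (MvPolynomial (Fin 4) ℂ) := inferInstance

theorem prime_q : Prime ((X 0 ^ 2 + X 1 ^ 2 + X 2 ^ 2 : R5)) := by
  have himg : (MvPolynomial.finSuccEquiv ℂ 4) (X 0 ^ 2 + X 1 ^ 2 + X 2 ^ 2 : R5)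
      = Polynomial.X ^ 2 + Polynomial.C (X 0 ^ 2 + X 1 ^ 2 : A4) := by
    have h1 : (X 1 : R5) = X (Fin.succ 0) := rfl
    have h2 : (X 2 : R5) = X (Fin.succ 1) := rfl
    rw [map_add, map_add, map_pow, map_pow, map_pow, finSuccEquiv_X_zero, h1, h2,
      finSuccEquiv_X_succ, finSuccEquiv_X_succ]
    rw [map_add, add_assoc, map_pow, map_pow]
  have hq : Prime (Polynomial.X ^ 2 + Polynomial.C (X 0 ^ 2 + X 1 ^ 2 : A4)) :=
    prime_quad _ no_sq
  exact (MulEquiv.prime_iff ((MvPolynomial.finSuccEquiv ℂ 4).toMulEquiv)).mp (himg ▸ hq)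

end JacSplayedAux2
namespace JacSplayedMain
open JacSplayedAux JacSplayedAux2

local notation "R5" => MvPolynomial (Fin 5) ℂ
local notation "qq" => (X 0 ^ 2 + X 1 ^ 2 + X 2 ^ 2 : MvPolynomial (Fin 5) ℂ)
local notation "uu" => (X 3 ^ 2 - X 4 ^ 2 : MvPolynomial (Fin 5) ℂ)

theorem mem2 {x y r : R5} (a b : R5) (h : r = a * x + b * y) : r ∈ Ideal.span {x, y} := by
  rw [h]
  exact add_mem (Ideal.mul_mem_left _ _ (Ideal.subset_span (by simp)))
    (Ideal.mul_mem_left _ _ (Ideal.subset_span (by simp)))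

theorem mem3 {x y z r : R5} (a b c : R5) (h : r = a * x + b * y + c * z) :
    r ∈ Ideal.span {x, y, z} := by
  rw [h]
  exact add_mem (add_mem (Ideal.mul_mem_left _ _ (Ideal.subset_span (by simp)))
      (Ideal.mul_mem_left _ _ (Ideal.subset_span (by simp))))
    (Ideal.mul_mem_left _ _ (Ideal.subset_span (by simp)))

theorem mul_gen_mem {S : Set R5} (a : R5) {g : R5} (hg : g ∈ S) : a * g ∈ Ideal.span S :=
  Ideal.mul_mem_left _ _ (Ideal.subset_span hg)

theorem aeval_span_le {f : Fin 5 → R5} {S T : Set R5}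
    (hST : ∀ x ∈ S, (aeval f) x ∈ Ideal.span T) :
    ∀ p ∈ Ideal.span S, aeval f p ∈ Ideal.span T := by
  intro p hp
  have hmap := Ideal.mem_map_of_mem (aeval f : R5 →ₐ[ℂ] R5).toRingHom hp
  rw [Ideal.map_span] at hmap
  refine Ideal.span_le.mpr ?_ hmap
  rintro _ ⟨x, hx, rfl⟩
  exact hST x hx

-- the retraction maps
def f1 : Fin 5 → R5 := fun i => if i = 0 ∨ i = 1 ∨ i = 2 then 0 else X i
def f3 : Fin 5 → R5 := fun i => if i = 3 ∨ i = 4 then 0 else X i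
def f4 : Fin 5 → R5 := fun i => if i = 4 then -(X 3) else X i

-- basic nonvanishing facts
theorem qq_ne_zero : qq ≠ 0 := by
  intro h0
  have := congrArg (eval ![1, 0, 0, 0, 0]) h0
  simp at this

theorem uu_ne_zero : uu ≠ 0 := by
  intro h0
  have := congrArg (eval ![0, 0, 0, 1, 0]) h0
  simp at this

theorem qq_not_dvd_two : ¬ (qq ∣ (2 : R5)) := by
  rintro ⟨w, hw⟩
  have := congrArg (eval ![0, 0, 0, 0, 0]) hw
  simp at this

theorem qq_not_dvd_X3 : ¬ (qq ∣ (X 3 : R5)) := by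
  rintro ⟨w, hw⟩
  have := congrArg (eval ![0, 0, 0, 1, 0]) hw
  simp at this

theorem prime_qq : Prime (qq : R5) := prime_q

/-- radicality via a retraction -/
theorem isRadical_of_retr (I J₀ : Ideal R5) (f : Fin 5 → R5)
    (h1 : ∀ p, p - aeval f p ∈ I)
    (h2 : ∀ p ∈ I, aeval f p ∈ J₀)
    (h3 : J₀ ≤ I)
    (h4 : ∀ (r : R5) (n : ℕ), r ^ n ∈ J₀ → r ∈ J₀) : I.IsRadical := by
  intro r hr
  obtain ⟨n, hn⟩ := hr
  have hJ : aeval f r ∈ J₀ := by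
    have := h2 _ hn
    rw [map_pow] at this
    exact h4 _ n this
  have : r = (r - aeval f r) + aeval f r := by ring
  rw [this]
  exact add_mem (h1 r) (h3 hJ)

end JacSplayedMain
namespace JacSplayedMain
open JacSplayedAux

local notation "R5" => MvPolynomial (Fin 5) ℂ
local notation "qq" => (X 0 ^ 2 + X 1 ^ 2 + X 2 ^ 2 : MvPolynomial (Fin 5) ℂ)
local notation "uu" => (X 3 ^ 2 - X 4 ^ 2 : MvPolynomial (Fin 5) ℂ)

theorem Xsub_mem {f : Fin 5 → R5} {I : Ideal R5} (h0 : X 0 - f 0 ∈ I) (h1 : X 1 - f 1 ∈ I)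
    (h2 : X 2 - f 2 ∈ I) (h3 : X 3 - f 3 ∈ I) (h4 : X 4 - f 4 ∈ I) : ∀ i, X i - f i ∈ I := by
  intro i; fin_cases i
  exacts [h0, h1, h2, h3, h4]

theorem sub_f1 (p : R5) : p - aeval f1 p ∈ Ideal.span {X 0, X 1, X 2} := by
  refine sub_aeval_mem f1 _ (Xsub_mem ?_ ?_ ?_ ?_ ?_) p
  · rw [show (X 0 : R5) - f1 0 = X 0 by simp [f1]]; exact Ideal.subset_span (by simp)
  · rw [show (X 1 : R5) - f1 1 = X 1 by simp [f1]]; exact Ideal.subset_span (by simp)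
  · rw [show (X 2 : R5) - f1 2 = X 2 by simp [f1]]; exact Ideal.subset_span (by simp)
  · rw [show (X 3 : R5) - f1 3 = 0 by simp [f1]]; exact Ideal.zero_mem _
  · rw [show (X 4 : R5) - f1 4 = 0 by simp [f1]]; exact Ideal.zero_mem _

theorem sub_f3 (p : R5) : p - aeval f3 p ∈ Ideal.span {X 3, X 4} := by
  refine sub_aeval_mem f3 _ (Xsub_mem ?_ ?_ ?_ ?_ ?_) p
  · rw [show (X 0 : R5) - f3 0 = 0 by simp [f3]]; exact Ideal.zero_mem _
  · rw [show (X 1 : R5) - f3 1 = 0 by simp [f3]]; exact Ideal.zero_mem _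
  · rw [show (X 2 : R5) - f3 2 = 0 by simp [f3]]; exact Ideal.zero_mem _
  · rw [show (X 3 : R5) - f3 3 = X 3 by simp [f3]]; exact Ideal.subset_span (by simp)
  · rw [show (X 4 : R5) - f3 4 = X 4 by simp [f3]]; exact Ideal.subset_span (by simp)

theorem sub_f4 (p : R5) : p - aeval f4 p ∈ Ideal.span {X 3 + X 4} := by
  refine sub_aeval_mem f4 _ (Xsub_mem ?_ ?_ ?_ ?_ ?_) p
  · rw [show (X 0 : R5) - f4 0 = 0 by simp [f4]]; exact Ideal.zero_mem _
  · rw [show (X 1 : R5) - f4 1 = 0 by simp [f4]]; exact Ideal.zero_mem _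
  · rw [show (X 2 : R5) - f4 2 = 0 by simp [f4]]; exact Ideal.zero_mem _
  · rw [show (X 3 : R5) - f4 3 = 0 by simp [f4]]; exact Ideal.zero_mem _
  · rw [show (X 4 : R5) - f4 4 = X 3 + X 4 by simp [f4]; ring]
    exact Ideal.subset_span (by simp)

theorem rad_I1 : (Ideal.span {X 0, X 1, X 2} : Ideal R5).IsRadical := by
  refine isRadical_of_retr _ (Ideal.span {0}) f1 sub_f1 ?_ ?_ ?_
  · refine aeval_span_le ?_
    intro x hx
    simp only [Set.mem_insert_iff, Set.mem_singleton_iff] at hx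
    rcases hx with rfl | rfl | rfl <;>
      [rw [show aeval f1 (X 0 : R5) = 0 by simp [f1]];
       rw [show aeval f1 (X 1 : R5) = 0 by simp [f1]];
       rw [show aeval f1 (X 2 : R5) = 0 by simp [f1]]] <;>
      exact Ideal.zero_mem _
  · intro x hx
    rw [Ideal.mem_span_singleton, zero_dvd_iff] at hx
    rw [hx]; exact Ideal.zero_mem _
  · intro r n hr
    rw [Ideal.mem_span_singleton, zero_dvd_iff] at hr ⊢
    rcases Nat.eq_zero_or_pos n with rfl | hn
    · rw [pow_zero] at hr; exact absurd hr one_ne_zero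
    · exact pow_eq_zero_iff hn.ne' |>.mp hr

theorem rad_I3 : (Ideal.span {X 3, X 4} : Ideal R5).IsRadical := by
  refine isRadical_of_retr _ (Ideal.span {0}) f3 sub_f3 ?_ ?_ ?_
  · refine aeval_span_le ?_
    intro x hx
    simp only [Set.mem_insert_iff, Set.mem_singleton_iff] at hx
    rcases hx with rfl | rfl <;>
      [rw [show aeval f3 (X 3 : R5) = 0 by simp [f3]];
       rw [show aeval f3 (X 4 : R5) = 0 by simp [f3]]] <;>
      exact Ideal.zero_mem _
  · intro x hx
    rw [Ideal.mem_span_singleton, zero_dvd_iff] at hx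
    rw [hx]; exact Ideal.zero_mem _
  · intro r n hr
    rw [Ideal.mem_span_singleton, zero_dvd_iff] at hr ⊢
    rcases Nat.eq_zero_or_pos n with rfl | hn
    · rw [pow_zero] at hr; exact absurd hr one_ne_zero
    · exact pow_eq_zero_iff hn.ne' |>.mp hr

theorem rad_I4 : (Ideal.span {X 3 + X 4, qq} : Ideal R5).IsRadical := by
  refine isRadical_of_retr _ (Ideal.span {qq}) f4 ?_ ?_ ?_ ?_
  · intro p
    have h := sub_f4 p
    refine Ideal.span_le.mpr ?_ h
    intro x hx
    simp only [Set.mem_singleton_iff] at hx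
    subst hx
    exact Ideal.subset_span (by simp)
  · refine aeval_span_le ?_
    intro x hx
    simp only [Set.mem_insert_iff, Set.mem_singleton_iff] at hx
    rcases hx with rfl | rfl
    · rw [show aeval f4 (X 3 + X 4 : R5) = 0 by simp [f4]]; exact Ideal.zero_mem _
    · rw [show aeval f4 (qq : R5) = qq by simp [f4]]; exact Ideal.subset_span (by simp)
  · refine Ideal.span_le.mpr ?_
    intro x hx
    simp only [Set.mem_singleton_iff] at hx
    subst hx
    exact Ideal.subset_span (by simp)
  · intro r n hr
    rw [Ideal.mem_span_singleton] at hr ⊢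
    exact prime_qq.dvd_of_dvd_pow hr

end JacSplayedMain
namespace JacSplayedMain
open JacSplayedAux

local notation "R5" => MvPolynomial (Fin 5) ℂ
local notation "qq" => (X 0 ^ 2 + X 1 ^ 2 + X 2 ^ 2 : MvPolynomial (Fin 5) ℂ)
local notation "uu" => (X 3 ^ 2 - X 4 ^ 2 : MvPolynomial (Fin 5) ℂ)

def f2 : Fin 5 → R5 := fun i => if i = 4 then X 3 else X i

theorem sub_f2 (p : R5) : p - aeval f2 p ∈ Ideal.span {X 3 - X 4} := by
  refine sub_aeval_mem f2 _ (Xsub_mem ?_ ?_ ?_ ?_ ?_) p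
  · rw [show (X 0 : R5) - f2 0 = 0 by simp [f2]]; exact Ideal.zero_mem _
  · rw [show (X 1 : R5) - f2 1 = 0 by simp [f2]]; exact Ideal.zero_mem _
  · rw [show (X 2 : R5) - f2 2 = 0 by simp [f2]]; exact Ideal.zero_mem _
  · rw [show (X 3 : R5) - f2 3 = 0 by simp [f2]]; exact Ideal.zero_mem _
  · rw [show (X 4 : R5) - f2 4 = -(X 3 - X 4) by simp [f2]]
    exact neg_mem (Ideal.subset_span (by simp))

theorem rad_I2 : (Ideal.span {X 3 - X 4, qq} : Ideal R5).IsRadical := by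
  refine isRadical_of_retr _ (Ideal.span {qq}) f2 ?_ ?_ ?_ ?_
  · intro p
    have h := sub_f2 p
    refine Ideal.span_le.mpr ?_ h
    intro x hx
    simp only [Set.mem_singleton_iff] at hx
    subst hx
    exact Ideal.subset_span (by simp)
  · refine aeval_span_le ?_
    intro x hx
    simp only [Set.mem_insert_iff, Set.mem_singleton_iff] at hx
    rcases hx with rfl | rfl
    · rw [show aeval f2 (X 3 - X 4 : R5) = 0 by simp [f2]]; exact Ideal.zero_mem _
    · rw [show aeval f2 (qq : R5) = qq by simp [f2]]; exact Ideal.subset_span (by simp)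
  · refine Ideal.span_le.mpr ?_
    intro x hx
    simp only [Set.mem_singleton_iff] at hx
    subst hx
    exact Ideal.subset_span (by simp)
  · intro r n hr
    rw [Ideal.mem_span_singleton] at hr ⊢
    exact prime_qq.dvd_of_dvd_pow hr

/-- backward inclusion -/
theorem inf_le_J' :
    (Ideal.span {X 0, X 1, X 2} ⊓ Ideal.span {X 3 - X 4, qq} ⊓ Ideal.span {X 3, X 4} ⊓
      Ideal.span {X 3 + X 4, qq} : Ideal R5) ≤
    Ideal.span {X 0 * uu, X 1 * uu, X 2 * uu, qq * X 3, qq * X 4} := by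
  intro r hr
  obtain ⟨⟨⟨hr1, hr2⟩, hr3⟩, hr4⟩ := hr
  -- Step 1 : r ∈ (uu, qq)
  obtain ⟨A, B, hAB⟩ := Ideal.mem_span_pair.mp hr2
  have hτr : aeval f4 r ∈ Ideal.span {qq} := by
    refine aeval_span_le ?_ r hr4
    intro x hx
    simp only [Set.mem_insert_iff, Set.mem_singleton_iff] at hx
    rcases hx with rfl | rfl
    · rw [show aeval f4 (X 3 + X 4 : R5) = 0 by simp [f4]]; exact Ideal.zero_mem _
    · rw [show aeval f4 (qq : R5) = qq by simp [f4]]; exact Ideal.subset_span (by simp)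
  have hτeq : aeval f4 r = aeval f4 A * (2 * X 3) + aeval f4 B * qq := by
    rw [← hAB, map_add, map_mul, map_mul,
      show aeval f4 (X 3 - X 4 : R5) = 2 * X 3 by simp [f4]; ring,
      show aeval f4 (qq : R5) = qq by simp [f4]]
  have hdvd : qq ∣ aeval f4 A * (2 * X 3) := by
    have hmem := Ideal.mem_span_singleton.mp hτr
    rw [hτeq] at hmem
    exact (dvd_add_left (Dvd.intro_left _ rfl)).mp hmem
  have hqA : qq ∣ aeval f4 A := by
    rcases (prime_qq.dvd_mul).mp hdvd with h | h
    · exact h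
    · rcases (prime_qq.dvd_mul).mp h with h' | h'
      · exact absurd h' qq_not_dvd_two
      · exact absurd h' qq_not_dvd_X3
  obtain ⟨A2, hA2⟩ := hqA
  obtain ⟨w, hw⟩ := Ideal.mem_span_singleton.mp (sub_f4 A)
  have hstep1 : r ∈ Ideal.span {uu, qq} := by
    refine Ideal.mem_span_pair.mpr ⟨w, A2 * (X 3 - X 4) + B, ?_⟩
    linear_combination hAB - (X 3 - X 4) * hw - (X 3 - X 4) * hA2
  -- Step 2
  obtain ⟨E, F, hEF⟩ := Ideal.mem_span_pair.mp hstep1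
  have hτ3r : aeval f3 r = 0 := by
    have hm : aeval f3 r ∈ Ideal.span ({0} : Set (MvPolynomial (Fin 5) ℂ)) := by
      refine aeval_span_le ?_ r hr3
      intro x hx
      simp only [Set.mem_insert_iff, Set.mem_singleton_iff] at hx
      rcases hx with rfl | rfl
      · rw [show aeval f3 (X 3 : R5) = 0 by simp [f3]]; exact Ideal.zero_mem _
      · rw [show aeval f3 (X 4 : R5) = 0 by simp [f3]]; exact Ideal.zero_mem _
    rwa [Ideal.mem_span_singleton, zero_dvd_iff] at hm
  have hFq : aeval f3 F * qq = 0 := by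
    have h := congrArg (aeval f3) hEF
    rw [map_add, map_mul, map_mul, hτ3r,
      show aeval f3 (uu : R5) = 0 by simp [f3],
      show aeval f3 (qq : R5) = qq by simp [f3], mul_zero, zero_add] at h
    exact h
  have hF0 : aeval f3 F = 0 := by
    rcases mul_eq_zero.mp hFq with h | h
    · exact h
    · exact absurd h qq_ne_zero
  have hFmem : F ∈ Ideal.span {X 3, X 4} := by
    have := sub_f3 F
    rwa [hF0, sub_zero] at this
  obtain ⟨σ', ρ', hFd⟩ := Ideal.mem_span_pair.mp hFmem
  have hqmem1 : (qq : R5) ∈ Ideal.span {X 0, X 1, X 2} := mem3 (X 0) (X 1) (X 2) (by ring)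
  have hEu : E * uu ∈ Ideal.span {X 0, X 1, X 2} := by
    have hEe : E * uu = r - F * qq := by linear_combination hEF
    rw [hEe]
    exact sub_mem hr1 (Ideal.mul_mem_left _ _ hqmem1)
  have hτ1Eu : aeval f1 (E * uu) = 0 := by
    have hm : aeval f1 (E * uu) ∈ Ideal.span ({0} : Set (MvPolynomial (Fin 5) ℂ)) := by
      refine aeval_span_le ?_ _ hEu
      intro x hx
      simp only [Set.mem_insert_iff, Set.mem_singleton_iff] at hx
      rcases hx with rfl | rfl | rfl
      · rw [show aeval f1 (X 0 : R5) = 0 by simp [f1]]; exact Ideal.zero_mem _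
      · rw [show aeval f1 (X 1 : R5) = 0 by simp [f1]]; exact Ideal.zero_mem _
      · rw [show aeval f1 (X 2 : R5) = 0 by simp [f1]]; exact Ideal.zero_mem _
    rwa [Ideal.mem_span_singleton, zero_dvd_iff] at hm
  have hE0 : aeval f1 E = 0 := by
    rw [map_mul, show aeval f1 (uu : R5) = uu by simp [f1]] at hτ1Eu
    rcases mul_eq_zero.mp hτ1Eu with h | h
    · exact h
    · exact absurd h uu_ne_zero
  have hEmem : E ∈ Ideal.span {X 0, X 1, X 2} := by
    have := sub_f1 E
    rwa [hE0, sub_zero] at this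
  obtain ⟨a, E', hE', hEd⟩ := Ideal.mem_span_insert.mp hEmem
  obtain ⟨b, c, hE'd⟩ := Ideal.mem_span_pair.mp hE'
  have hfinal : r = a * (X 0 * uu) + b * (X 1 * uu) + c * (X 2 * uu)
      + σ' * (qq * X 3) + ρ' * (qq * X 4) := by
    linear_combination (-1 : MvPolynomial (Fin 5) ℂ) * hEF + uu * hEd - uu * hE'd - qq * hFd
  rw [hfinal]
  refine add_mem (add_mem (add_mem (add_mem ?_ ?_) ?_) ?_) ?_ <;> exact mul_gen_mem _ (by simp)

end JacSplayedMain
namespace JacSplayedMain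

local notation "R5" => MvPolynomial (Fin 5) ℂ
local notation "qq" => (X 0 ^ 2 + X 1 ^ 2 + X 2 ^ 2 : MvPolynomial (Fin 5) ℂ)
local notation "uu" => (X 3 ^ 2 - X 4 ^ 2 : MvPolynomial (Fin 5) ℂ)

theorem J'_le_inf :
    Ideal.span {X 0 * uu, X 1 * uu, X 2 * uu, qq * X 3, qq * X 4} ≤
      (Ideal.span {X 0, X 1, X 2} ⊓ Ideal.span {X 3 - X 4, qq} ⊓ Ideal.span {X 3, X 4} ⊓
        Ideal.span {X 3 + X 4, qq} : Ideal R5) := by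
  refine Ideal.span_le.mpr ?_
  intro g hg
  simp only [Set.mem_insert_iff, Set.mem_singleton_iff] at hg
  rcases hg with rfl | rfl | rfl | rfl | rfl
  · exact ⟨⟨⟨mem3 uu 0 0 (by ring), mem2 (X 0 * (X 3 + X 4)) 0 (by ring)⟩,
      mem2 (X 0 * X 3) (-(X 0 * X 4)) (by ring)⟩, mem2 (X 0 * (X 3 - X 4)) 0 (by ring)⟩
  · exact ⟨⟨⟨mem3 0 uu 0 (by ring), mem2 (X 1 * (X 3 + X 4)) 0 (by ring)⟩,
      mem2 (X 1 * X 3) (-(X 1 * X 4)) (by ring)⟩, mem2 (X 1 * (X 3 - X 4)) 0 (by ring)⟩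
  · exact ⟨⟨⟨mem3 0 0 uu (by ring), mem2 (X 2 * (X 3 + X 4)) 0 (by ring)⟩,
      mem2 (X 2 * X 3) (-(X 2 * X 4)) (by ring)⟩, mem2 (X 2 * (X 3 - X 4)) 0 (by ring)⟩
  · exact ⟨⟨⟨mem3 (X 3 * X 0) (X 3 * X 1) (X 3 * X 2) (by ring), mem2 0 (X 3) (by ring)⟩,
      mem2 qq 0 (by ring)⟩, mem2 0 (X 3) (by ring)⟩
  · exact ⟨⟨⟨mem3 (X 4 * X 0) (X 4 * X 1) (X 4 * X 2) (by ring), mem2 0 (X 4) (by ring)⟩,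
      mem2 0 qq (by ring)⟩, mem2 0 (X 4) (by ring)⟩

theorem half_mem {I : Ideal R5} {w : R5} (hw : 2 * w ∈ I) : w ∈ I := by
  have h2 : (C (2⁻¹ : ℂ) : R5) * (2 * w) ∈ I := Ideal.mul_mem_left _ _ hw
  have e : (C (2⁻¹ : ℂ) : R5) * (2 * w) = w := by
    rw [← mul_assoc, show ((2 : R5)) = C (2 : ℂ) from (map_ofNat C 2).symm, ← map_mul]
    norm_num
  rwa [e] at h2

end JacSplayedMain
open JacSplayedMain in
/-- For `h = (x² + y² + z²)(s² - t²)` in `ℂ[x,y,z,s,t]`, the Jacobian ideal of `h`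
equals the intersection `(x,y,z) ∩ (s-t, x²+y²+z²) ∩ (s,t) ∩ (s+t, x²+y²+z²)`;
in particular it is radical. -/
theorem jacobian_of_splayed_example_eq_inf_and_isRadical
    (h : MvPolynomial (Fin 5) ℂ)
    (hh : h = (X 0 ^ 2 + X 1 ^ 2 + X 2 ^ 2) * (X 3 ^ 2 - X 4 ^ 2)) :
    Ideal.span (Set.range fun i : Fin 5 => pderiv i h) =
      Ideal.span {X 0, X 1, X 2} ⊓
        Ideal.span {X 3 - X 4, X 0 ^ 2 + X 1 ^ 2 + X 2 ^ 2} ⊓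
        Ideal.span {X 3, X 4} ⊓
        Ideal.span {X 3 + X 4, X 0 ^ 2 + X 1 ^ 2 + X 2 ^ 2} ∧
    (Ideal.span (Set.range fun i : Fin 5 => pderiv i h)).IsRadical := by
  subst hh
  set P : MvPolynomial (Fin 5) ℂ := (X 0 ^ 2 + X 1 ^ 2 + X 2 ^ 2) * (X 3 ^ 2 - X 4 ^ 2) with hP
  have d0 : pderiv (0 : Fin 5) P = 2 * (X 0 * (X 3 ^ 2 - X 4 ^ 2)) := by
    rw [hP]; simp [pderiv_mul, pderiv_pow, pderiv_X_self, pderiv_X_of_ne]; ring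
  have d1 : pderiv (1 : Fin 5) P = 2 * (X 1 * (X 3 ^ 2 - X 4 ^ 2)) := by
    rw [hP]; simp [pderiv_mul, pderiv_pow, pderiv_X_self, pderiv_X_of_ne]; ring
  have d2 : pderiv (2 : Fin 5) P = 2 * (X 2 * (X 3 ^ 2 - X 4 ^ 2)) := by
    rw [hP]; simp [pderiv_mul, pderiv_pow, pderiv_X_self, pderiv_X_of_ne]; ring
  have d3 : pderiv (3 : Fin 5) P = 2 * ((X 0 ^ 2 + X 1 ^ 2 + X 2 ^ 2) * X 3) := by
    rw [hP]; simp [pderiv_mul, pderiv_pow, pderiv_X_self, pderiv_X_of_ne]; ring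
  have d4 : pderiv (4 : Fin 5) P = -(2 * ((X 0 ^ 2 + X 1 ^ 2 + X 2 ^ 2) * X 4)) := by
    rw [hP]; simp [pderiv_mul, pderiv_pow, pderiv_X_self, pderiv_X_of_ne]; ring
  have Jeq : Ideal.span (Set.range fun i : Fin 5 => pderiv i P) =
      Ideal.span {X 0 * (X 3 ^ 2 - X 4 ^ 2), X 1 * (X 3 ^ 2 - X 4 ^ 2), X 2 * (X 3 ^ 2 - X 4 ^ 2),
        (X 0 ^ 2 + X 1 ^ 2 + X 2 ^ 2) * X 3, (X 0 ^ 2 + X 1 ^ 2 + X 2 ^ 2) * X 4} := by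
    apply le_antisymm
    · refine Ideal.span_le.mpr ?_
      rintro _ ⟨i, rfl⟩
      fin_cases i
      · show pderiv (0 : Fin 5) P ∈ _
        rw [d0]; exact mul_gen_mem 2 (by simp)
      · show pderiv (1 : Fin 5) P ∈ _
        rw [d1]; exact mul_gen_mem 2 (by simp)
      · show pderiv (2 : Fin 5) P ∈ _
        rw [d2]; exact mul_gen_mem 2 (by simp)
      · show pderiv (3 : Fin 5) P ∈ _
        rw [d3]; exact mul_gen_mem 2 (by simp)
      · show pderiv (4 : Fin 5) P ∈ _
        rw [d4]; exact neg_mem (mul_gen_mem 2 (by simp))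
    · refine Ideal.span_le.mpr ?_
      intro g hg
      simp only [Set.mem_insert_iff, Set.mem_singleton_iff] at hg
      rcases hg with rfl | rfl | rfl | rfl | rfl
      · exact half_mem (by rw [← d0]; exact Ideal.subset_span ⟨0, rfl⟩)
      · exact half_mem (by rw [← d1]; exact Ideal.subset_span ⟨1, rfl⟩)
      · exact half_mem (by rw [← d2]; exact Ideal.subset_span ⟨2, rfl⟩)
      · exact half_mem (by rw [← d3]; exact Ideal.subset_span ⟨3, rfl⟩)
      · refine half_mem ?_
        have e : (2 : MvPolynomial (Fin 5) ℂ) * ((X 0 ^ 2 + X 1 ^ 2 + X 2 ^ 2) * X 4)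
            = -(pderiv (4 : Fin 5) P) := by rw [d4]; ring
        rw [e]; exact neg_mem (Ideal.subset_span ⟨4, rfl⟩)
  have hIJ := le_antisymm J'_le_inf inf_le_J'
  constructor
  · rw [Jeq]; exact hIJ.symm ▸ rfl
  · rw [Jeq, hIJ]
    exact ((rad_I1.inf rad_I2).inf rad_I3).inf rad_I4
end
end JacSplayedAux
end
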